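/- Let F₀ : ℝ → [0,1] be monotone nondecreasing and continuous on an interval [a, b], let G be a measure on ℝ with a continuous positive density g on [a,b] with respect to Lebesgue measure, and let (Fₙ) be a sequence of monotone nondecreasing functions ℝ → [0,1] with ∫_{[a,b]} |Fₙ(t) - F₀(t)| dG(t) → 0. Then sup_{t ∈ [a', b']} |Fₙ(t) - F₀(t)| → 0 for any a < a' < b' < b. -/

import Mathlib

open MeasureTheory

theorem stmt_6 (a b a' b' c : ℝ) (hc : 0 < c)
    (F₀ : ℝ → ℝ) (F : ℕ → ℝ → ℝ) (g : ℝ → ℝ)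
    (hF₀mono : Monotone F₀) (hF₀01 : ∀ t, F₀ t ∈ Set.Icc (0:ℝ) 1)
    (hF₀cont : ContinuousOn F₀ (Set.Icc a b))
    (hgcont : ContinuousOn g (Set.Icc a b))
    (hglb : ∀ t ∈ Set.Icc a b, c ≤ g t)
    (hFmono : ∀ n, Monotone (F n)) (hF01 : ∀ n t, F n t ∈ Set.Icc (0:ℝ) 1)
    (hL1 : Filter.Tendsto (fun n => ∫ t in Set.Icc a b, |F n t - F₀ t| * g t)
      Filter.atTop (nhds 0))
    (haa' : a < a') (ha'b' : a' < b') (hb'b : b' < b) :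
    ∀ ε > 0, ∃ N : ℕ, ∀ n ≥ N, ∀ t ∈ Set.Icc a' b', |F n t - F₀ t| < ε := by
  intro ε hε
  have hab : a < b := by linarith
  -- uniform continuity of F₀ on [a,b]
  have hUC := (isCompact_Icc.uniformContinuousOn_of_continuous hF₀cont)
  rw [Metric.uniformContinuousOn_iff_le] at hUC
  obtain ⟨δ, hδpos, hδ⟩ := hUC (ε/2) (by linarith)
  set δ₀ : ℝ := min δ (min (a' - a) (b - b')) with hδ₀def
  have hδ₀pos : 0 < δ₀ := by
    simp only [hδ₀def, lt_min_iff]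
    exact ⟨hδpos, by linarith, by linarith⟩
  have hδ₀δ : δ₀ ≤ δ := min_le_left _ _
  have hδ₀a : δ₀ ≤ a' - a := le_trans (min_le_right _ _) (min_le_left _ _)
  have hδ₀b : δ₀ ≤ b - b' := le_trans (min_le_right _ _) (min_le_right _ _)
  -- bound on g
  obtain ⟨C, hC⟩ := isCompact_Icc.exists_bound_of_continuousOn hgcont
  -- integrand is a.e. strongly measurable and integrable on [a,b]
  have hmeas : ∀ n, AEStronglyMeasurable (fun t => |F n t - F₀ t| * g t)
      (volume.restrict (Set.Icc a b)) := by
    intro n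
    have h1 : Measurable fun t => |F n t - F₀ t| :=
      ((hFmono n).measurable.sub hF₀mono.measurable).abs
    have h2 : AEMeasurable g (volume.restrict (Set.Icc a b)) :=
      hgcont.aemeasurable measurableSet_Icc
    exact (h1.aemeasurable.mul h2).aestronglyMeasurable
  have habs1 : ∀ n t, |F n t - F₀ t| ≤ 1 := by
    intro n t
    have h1 := hF01 n t
    have h2 := hF₀01 t
    simp only [Set.mem_Icc] at h1 h2
    rw [abs_le]; constructor <;> linarith [h1.1, h1.2, h2.1, h2.2]
  have hint : ∀ n, IntegrableOn (fun t => |F n t - F₀ t| * g t) (Set.Icc a b) := by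
    intro n
    refine (integrable_const C).mono' (hmeas n) ?_
    rw [ae_restrict_iff' measurableSet_Icc]
    filter_upwards with t ht
    have hg := hC t ht
    have h1 := habs1 n t
    have h2 : (0:ℝ) ≤ |F n t - F₀ t| := abs_nonneg _
    calc ‖|F n t - F₀ t| * g t‖ = |F n t - F₀ t| * ‖g t‖ := by
          rw [norm_mul]; simp [abs_of_nonneg h2]
      _ ≤ 1 * C := by
          apply mul_le_mul h1 hg (norm_nonneg _) zero_le_one
      _ = C := one_mul C
  -- nonnegativity of integrand on [a,b]
  have hnn : ∀ n, 0 ≤ᵐ[volume.restrict (Set.Icc a b)]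
      (fun t => |F n t - F₀ t| * g t) := by
    intro n
    filter_upwards [ae_restrict_mem measurableSet_Icc] with t ht
    exact mul_nonneg (abs_nonneg _) (le_trans hc.le (hglb t ht))
  -- choose N
  have hpos : 0 < c * δ₀ * (ε / 2) := by positivity
  obtain ⟨N, hN⟩ := Filter.eventually_atTop.mp (hL1.eventually (gt_mem_nhds hpos))
  refine ⟨N, fun n hn t ht => ?_⟩
  by_contra hcon
  push_neg at hcon
  have ht' : t ∈ Set.Icc a' b' := ht
  simp only [Set.mem_Icc] at ht'
  -- a key sub-lemma: if integrand ≥ ε/2 * c on Icc u v ⊆ Icc a b with v - u = δ₀,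
  -- then the integral is ≥ c*δ₀*(ε/2)
  have key : ∀ u v : ℝ, a ≤ u → v ≤ b → v - u = δ₀ →
      (∀ s ∈ Set.Icc u v, ε/2 * c ≤ |F n s - F₀ s| * g s) →
      c * δ₀ * (ε/2) ≤ ∫ s in Set.Icc a b, |F n s - F₀ s| * g s := by
    intro u v hau hvb huv hbig
    have hsub : Set.Icc u v ⊆ Set.Icc a b := Set.Icc_subset_Icc hau hvb
    have h1 : (∫ s in Set.Icc u v, |F n s - F₀ s| * g s)
        ≤ ∫ s in Set.Icc a b, |F n s - F₀ s| * g s :=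
      setIntegral_mono_set (hint n) (hnn n) (HasSubset.Subset.eventuallyLE hsub)
    have h2 : (∫ s in Set.Icc u v, (ε/2 * c))
        ≤ ∫ s in Set.Icc u v, |F n s - F₀ s| * g s := by
      apply setIntegral_mono_on (integrable_const _)
        ((hint n).mono_set hsub) measurableSet_Icc hbig
    have h3 : (∫ s in Set.Icc u v, (ε/2 * c)) = c * δ₀ * (ε/2) := by
      rw [setIntegral_const, measureReal_def, Real.volume_Icc, huv,
        ENNReal.toReal_ofReal hδ₀pos.le, smul_eq_mul]
      ring
    linarith
  have hbig : c * δ₀ * (ε/2) ≤ ∫ s in Set.Icc a b, |F n s - F₀ s| * g s := by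
    rcases le_or_gt (F₀ t) (F n t) with h | h
    · -- F n t - F₀ t ≥ ε
      have hεle : ε ≤ F n t - F₀ t := by
        rw [abs_of_nonneg (by linarith)] at hcon; linarith
      refine key t (t + δ₀) (by linarith [ht'.1]) (by linarith [ht'.2]) (by ring) ?_
      intro s hs
      simp only [Set.mem_Icc] at hs
      have hsab : s ∈ Set.Icc a b := ⟨by linarith [ht'.1], by linarith [ht'.2]⟩
      have htab : t ∈ Set.Icc a b := ⟨by linarith [ht'.1], by linarith [ht'.2]⟩
      have hF₀close : F₀ s ≤ F₀ t + ε/2 := by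
        have := hδ s hsab t htab (by
          rw [Real.dist_eq, abs_of_nonneg (by linarith [hs.1])]
          linarith [hs.2])
        rw [Real.dist_eq] at this
        have := (abs_le.mp this).2
        linarith
      have hFmono' : F n t ≤ F n s := hFmono n hs.1
      have : ε/2 ≤ F n s - F₀ s := by linarith
      have habs : ε/2 ≤ |F n s - F₀ s| := le_trans this (le_abs_self _)
      calc ε/2 * c ≤ |F n s - F₀ s| * g s :=
            mul_le_mul habs (hglb s hsab) hc.le (abs_nonneg _)
        _ = _ := rfl
    · -- F₀ t - F n t ≥ ε
      have hεle : ε ≤ F₀ t - F n t := by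
        rw [abs_of_nonpos (by linarith)] at hcon; linarith
      refine key (t - δ₀) t (by linarith [ht'.1]) (by linarith [ht'.2]) (by ring) ?_
      intro s hs
      simp only [Set.mem_Icc] at hs
      have hsab : s ∈ Set.Icc a b := ⟨by linarith [ht'.1], by linarith [ht'.2]⟩
      have htab : t ∈ Set.Icc a b := ⟨by linarith [ht'.1], by linarith [ht'.2]⟩
      have hF₀close : F₀ t - ε/2 ≤ F₀ s := by
        have := hδ s hsab t htab (by
          rw [Real.dist_eq, abs_of_nonpos (by linarith [hs.2])]
          linarith [hs.1])
        rw [Real.dist_eq] at this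
        have := (abs_le.mp this).1
        linarith
      have hFmono' : F n s ≤ F n t := hFmono n hs.2
      have : ε/2 ≤ F₀ s - F n s := by linarith
      have habs : ε/2 ≤ |F n s - F₀ s| := by
        rw [abs_sub_comm]; exact le_trans this (le_abs_self _)
      exact mul_le_mul habs (hglb s hsab) hc.le (abs_nonneg _)
  have := hN n hn
  linarith
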